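/- Let a₀ ≥ 3 and k ≥ 4 be integers. Let A ⊆ ℕ be the set defined by the greedy rule: a₀ ∈ A, and for n > a₀, n ∈ A if and only if there do not exist a, b ∈ A with a < n, b < n and n = k·b − a. Then A = ⋃_{l≥0} [a_l, b_l] ∩ ℕ, where b₀ = ⌊k·a₀/2⌋, a_l = k·b_{l−1} − a₀ + 1, and b_l = ⌊k·a_l/2⌋ for l ≥ 1. -/
import Mathlib


theorem stmt_12 (k a₀ : ℕ) (hk : 4 ≤ k) (ha₀ : 3 ≤ a₀)
    (a b : ℕ → ℕ) (ha0 : a 0 = a₀)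
    (hb : ∀ l, b l = k * a l / 2)
    (ha : ∀ l, a (l + 1) = k * b l - a₀ + 1)
    (A : Set ℕ)
    (hlow : ∀ m < a₀, m ∉ A) (hmem : a₀ ∈ A)
    (hgreedy : ∀ n > a₀,
      (n ∈ A ↔ ¬ ∃ x ∈ A, ∃ y ∈ A, x < n ∧ y < n ∧ n + x = k * y)) :
    A = {m : ℕ | ∃ l, a l ≤ m ∧ m ≤ b l} := by
  have hprod : ∀ x y : ℕ, 4 ≤ x → 3 ≤ y → 3 * x + 4 * y ≤ x * y + 12 := by
    intro x y hx hy
    obtain ⟨c, rfl⟩ : ∃ c, x = c + 4 := ⟨x - 4, by omega⟩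
    obtain ⟨d, rfl⟩ : ∃ d, y = d + 3 := ⟨y - 3, by omega⟩
    nlinarith [Nat.zero_le (c * d)]
  have halow : ∀ l, a₀ ≤ a l := by
    intro l
    induction l with
    | zero => omega
    | succ m ih =>
      have h1 : 2 * a m ≤ k * a m := Nat.mul_le_mul (by omega) le_rfl
      have h2 : a m ≤ b m := by rw [hb]; omega
      have h3 : 2 * b m ≤ k * b m := Nat.mul_le_mul (by omega) le_rfl
      rw [ha]; omega
  have ha3 : ∀ l, 3 ≤ a l := fun l => le_trans ha₀ (halow l)
  have hlen : ∀ l, a l + (k - 1) ≤ b l := by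
    intro l
    have h3 := hprod k (a l) hk (ha3 l)
    have h4 := ha3 l
    rw [hb]; omega
  have hab : ∀ l, a l ≤ b l := fun l => by have := hlen l; omega
  have hbk : ∀ l, b l ≤ k * b l := fun l => Nat.le_mul_of_pos_left _ (by omega)
  have hbk4 : ∀ l, 4 * b l ≤ k * b l := fun l => Nat.mul_le_mul hk le_rfl
  have hE : ∀ l, k * b l + 1 = a (l + 1) + a₀ := by
    intro l
    have h1 := halow l
    have h2 := hab l
    have h3 := hbk l
    rw [ha]; omega
  have hstep : ∀ l, b l < a (l + 1) := by
    intro l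
    have h1 := hE l
    have h2 := halow l
    have h3 := hab l
    have h4 := hbk4 l
    omega
  have hmono : StrictMono a := by
    apply strictMono_nat_of_lt_succ
    intro l
    exact lt_of_le_of_lt (hab l) (hstep l)
  have bmono : ∀ i j, i ≤ j → b i ≤ b j := by
    intro i j hij
    rw [hb, hb]
    exact Nat.div_le_div_right (Nat.mul_le_mul le_rfl (hmono.monotone hij))
  have hgrow : ∀ l, l + a₀ ≤ a l := by
    intro l
    induction l with
    | zero => omega
    | succ m ih => have := hmono (show m < m + 1 by omega); omega
  have hD : ∀ l, 2 * b l ≤ k * a l ∧ k * a l ≤ 2 * b l + 1 := by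
    intro l; rw [hb]; omega
  ext n
  simp only [Set.mem_setOf_eq]
  induction n using Nat.strong_induction_on with
  | _ n IH =>
  rcases lt_trichotomy n a₀ with hn | hn | hn
  · constructor
    · intro h; exact absurd h (hlow n hn)
    · rintro ⟨l, h1, h2⟩; have := halow l; omega
  · subst hn
    constructor
    · intro _
      exact ⟨0, ha0.le, by have h1 := hlen 0; omega⟩
    · intro _; exact hmem
  · -- locate the block index l with a l ≤ n < a (l+1)
    obtain ⟨l, hln, hlsucc⟩ : ∃ l, a l ≤ n ∧ n < a (l + 1) := by
      have hP0 : a 0 ≤ n := by omega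
      refine ⟨Nat.findGreatest (fun i => a i ≤ n) n,
        Nat.findGreatest_spec (P := fun i => a i ≤ n) (Nat.zero_le n) hP0, ?_⟩
      by_contra h
      push_neg at h
      have h1 := hgrow (Nat.findGreatest (fun i => a i ≤ n) n)
      have h2 := Nat.findGreatest_spec (P := fun i => a i ≤ n) (Nat.zero_le n) hP0
      exact absurd h
        (Nat.findGreatest_is_greatest (P := fun i => a i ≤ n)
          (n := n) (Nat.lt_succ_self _) (by omega))
    by_cases hnb : n ≤ b l
    · -- n lies in a block: n ∈ A
      have hnS : ∃ j, a j ≤ n ∧ n ≤ b j := ⟨l, hln, hnb⟩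
      constructor
      · intro _; exact hnS
      · intro _
        rw [hgreedy n hn]
        rintro ⟨x, hxA, y, hyA, hxn, hyn, heq⟩
        obtain ⟨j, hyj1, hyj2⟩ := (IH y hyn).1 hyA
        rcases lt_trichotomy j l with hjl | hjl | hjl
        · -- y in an earlier block ⇒ x < a₀
          have h1 : k * y ≤ k * b j := mul_le_mul_right hyj2 k
          have h2 : k * b j ≤ k * b (l - 1) :=
            mul_le_mul_right (bmono j (l - 1) (by omega)) k
          have h3 := hE (l - 1)
          have h4 : l - 1 + 1 = l := by omega
          rw [h4] at h3
          exact hlow x (by omega) hxA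
        · -- y in the same block ⇒ x ≥ n
          subst hjl
          have h1 : k * a j ≤ k * y := mul_le_mul_right hyj1 k
          have h2 := hD j
          omega
        · -- y in a later block: impossible
          have h1 : a (l + 1) ≤ a j := hmono.monotone (by omega)
          omega
    · -- n lies in a gap: n ∉ A
      push_neg at hnb
      have hnotS : ¬ ∃ j, a j ≤ n ∧ n ≤ b j := by
        rintro ⟨j, hj1, hj2⟩
        rcases le_or_gt j l with h | h
        · have := bmono j l h; omega
        · have := hmono.monotone (show l + 1 ≤ j by omega); omega
      have hEl := hE l
      have hup : n + a₀ ≤ k * b l := by omega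
      obtain ⟨j, hjl, hPj, hng⟩ :
          ∃ j, j ≤ l ∧ n + a j ≤ k * b l ∧
            (j = l ∨ (j < l ∧ k * b l < n + a (j + 1))) := by
        refine ⟨Nat.findGreatest (fun i => n + a i ≤ k * b l) l,
          Nat.findGreatest_le l,
          Nat.findGreatest_spec (P := fun i => n + a i ≤ k * b l)
            (Nat.zero_le l) (show n + a 0 ≤ k * b l by rw [ha0]; exact hup), ?_⟩
        rcases eq_or_lt_of_le
          (Nat.findGreatest_le (P := fun i => n + a i ≤ k * b l) l) with h | h
        · exact Or.inl h
        · refine Or.inr ⟨h, ?_⟩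
          have h9 : ¬ (n + a (Nat.findGreatest (fun i => n + a i ≤ k * b l) l + 1)
              ≤ k * b l) :=
            Nat.findGreatest_is_greatest (P := fun i => n + a i ≤ k * b l)
              (n := l) (by omega) (by omega)
          omega
      have hDl := hD l
      have habl := hab l
      have hcb : k * a l ≤ n + b j := by
        rcases hng with rfl | ⟨hjlt, hng⟩
        · omega
        · have h2 : a₀ ≤ k * b j :=
            le_trans (le_trans (halow j) (hab j)) (hbk j)
          have h1 := ha j
          have h3 : k * b j ≤ k * b (l - 1) :=
            mul_le_mul_right (bmono j (l - 1) (by omega)) k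
          have h4 := hE (l - 1)
          have h5 : l - 1 + 1 = l := by omega
          rw [h5] at h4
          have h8 := hbk4 l
          omega
      rcases le_or_gt (k * a l) (n + a j) with hcA | hcB
      · -- case A: pick y with k*y ∈ [n + a j, n + a j + k - 1]
        obtain ⟨y, r, hr, hdm⟩ : ∃ y r, r < k ∧ n + a j + (k - 1) = k * y + r :=
          ⟨_, _, Nat.mod_lt _ (show 0 < k by omega), (Nat.div_add_mod _ k).symm⟩
        have hky1 : n + a j ≤ k * y := by omega
        have hky2 : k * y ≤ n + a j + (k - 1) := by omega
        have hyl : a l ≤ y := by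
          have h1 : k * a l ≤ k * y := by omega
          exact Nat.le_of_mul_le_mul_left h1 (by omega)
        have hyb : y ≤ b l := by
          have h2 : k * (b l + 1) = k * b l + k := by ring
          have h1 : k * y < k * (b l + 1) := by omega
          have := Nat.lt_of_mul_lt_mul_left h1
          omega
        obtain ⟨x, hxeq⟩ : ∃ x, k * y = n + x := ⟨k * y - n, by omega⟩
        have hlenj := hlen j
        have hxj1 : a j ≤ x := by omega
        have hxj2 : x ≤ b j := by omega
        have hxn : x < n := by
          have h5 : k * 3 ≤ k * a j := Nat.mul_le_mul le_rfl (ha3 j)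
          have h6 : k * a j ≤ k * a l := Nat.mul_le_mul le_rfl (hmono.monotone hjl)
          have h7 : 4 * a j ≤ k * a j := Nat.mul_le_mul hk le_rfl
          omega
        have hyn : y < n := by omega
        have hyA : y ∈ A := (IH y hyn).2 ⟨l, hyl, hyb⟩
        have hxA : x ∈ A := (IH x hxn).2 ⟨j, hxj1, hxj2⟩
        have hnA : n ∉ A := fun hA =>
          ((hgreedy n hn).1 hA) ⟨x, hxA, y, hyA, hxn, hyn, hxeq.symm⟩
        constructor
        · intro h; exact absurd h hnA
        · intro h; exact absurd h hnotS
      · -- case B: take y = a l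
        obtain ⟨x, hxeq⟩ : ∃ x, k * a l = n + x := ⟨k * a l - n, by omega⟩
        have hxj1 : a j ≤ x := by omega
        have hxj2 : x ≤ b j := by omega
        have hxn : x < n := by omega
        have hyn : a l < n := by omega
        have hyA : a l ∈ A := (IH (a l) hyn).2 ⟨l, le_rfl, habl⟩
        have hxA : x ∈ A := (IH x hxn).2 ⟨j, hxj1, hxj2⟩
        have hnA : n ∉ A := fun hA =>
          ((hgreedy n hn).1 hA) ⟨x, hxA, a l, hyA, hxn, hyn, hxeq.symm⟩
        constructor
        · intro h; exact absurd h hnA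
        · intro h; exact absurd h hnotS
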